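/- Let γ : [0, s₀] → ℝ² be a C² unit-speed plane curve with T(s) = γ'(s), N(s) = T(s)^⊥, and curvature K(s) ≥ 0 with T(s₁)·T(s) > 0 for all s₁ < s ≤ s₀. Then for each fixed s₁ ∈ [0, s₀] and all s ∈ (s₁, s₀] one has T(s₁)·N(s) ≤ 0. -/

import Mathlib

/-- Let γ = (α, β) be a C² unit-speed plane curve on [0, s₀] with curvature
K = α'β'' − β'α'' ≥ 0 on [0, s₀], and let s₁ ∈ [0, s₀] be such that
T(s₁)·T(s) > 0 for all s ∈ (s₁, s₀]. Then T(s₁)·N(s) ≤ 0 for all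
s ∈ (s₁, s₀], where T = (α', β') and N = (−β', α'). -/
theorem stmt_7 (s₀ : ℝ) (hs₀ : 0 < s₀) (α β α' β' α'' β'' : ℝ → ℝ)
    (hα : ∀ s, HasDerivAt α (α' s) s) (hβ : ∀ s, HasDerivAt β (β' s) s)
    (hα' : ∀ s, HasDerivAt α' (α'' s) s) (hβ' : ∀ s, HasDerivAt β' (β'' s) s)
    (hunit : ∀ s, α' s ^ 2 + β' s ^ 2 = 1)
    (hK : ∀ s ∈ Set.Icc (0:ℝ) s₀, 0 ≤ α' s * β'' s - β' s * α'' s)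
    (s₁ : ℝ) (hs₁ : s₁ ∈ Set.Icc (0:ℝ) s₀)
    (hTT : ∀ s : ℝ, s₁ < s → s ≤ s₀ → 0 < α' s₁ * α' s + β' s₁ * β' s) :
    ∀ s : ℝ, s₁ < s → s ≤ s₀ →
      α' s₁ * (-β' s) + β' s₁ * α' s ≤ 0 := by
  -- orthogonality: differentiating the unit-speed identity
  have horth : ∀ s, α' s * α'' s + β' s * β'' s = 0 := by
    intro s
    have h1 : HasDerivAt (fun s => α' s ^ 2 + β' s ^ 2)
        (2 * α' s * α'' s + 2 * β' s * β'' s) s := by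
      have := ((hα' s).fun_pow 2).fun_add ((hβ' s).fun_pow 2)
      simpa [mul_comm, mul_assoc, mul_left_comm] using this
    have h2 : HasDerivAt (fun s => α' s ^ 2 + β' s ^ 2) 0 s := by
      have he : (fun s => α' s ^ 2 + β' s ^ 2) = fun _ => (1:ℝ) := funext hunit
      rw [he]; exact hasDerivAt_const s 1
    have := h1.unique h2
    linarith
  intro s hs1 hs2
  set f : ℝ → ℝ := fun u => α' s₁ * (-β' u) + β' s₁ * α' u with hfdef
  have hf' : ∀ u, HasDerivAt f (α' s₁ * (-β'' u) + β' s₁ * α'' u) u := by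
    intro u
    exact ((hβ' u).neg.const_mul _).add ((hα' u).const_mul _)
  have hderiv_nonpos : ∀ u ∈ Set.Ioo s₁ s, deriv f u ≤ 0 := by
    intro u hu
    rw [(hf' u).deriv]
    have hKu : 0 ≤ α' u * β'' u - β' u * α'' u :=
      hK u ⟨by linarith [hs₁.1, hu.1], by linarith [hu.2]⟩
    have hTu : 0 < α' s₁ * α' u + β' s₁ * β' u := hTT u hu.1 (by linarith [hu.2])
    have h1 := horth u
    have h2 := hunit u
    have hid : α' s₁ * (-β'' u) + β' s₁ * α'' u
        = -((α' u * β'' u - β' u * α'' u) * (α' s₁ * α' u + β' s₁ * β' u)) := by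
      linear_combination (α' s₁ * β'' u - β' s₁ * α'' u) * h2 +
        (α' u * β' s₁ - β' u * α' s₁) * h1
    rw [hid]
    exact neg_nonpos.mpr (mul_nonneg hKu hTu.le)
  have hcont : ContinuousOn f (Set.Icc s₁ s) :=
    fun u _ => (hf' u).continuousAt.continuousWithinAt
  have hanti : AntitoneOn f (Set.Icc s₁ s) :=
    antitoneOn_of_deriv_nonpos (convex_Icc s₁ s) hcont
      (fun u _ => (hf' u).differentiableAt.differentiableWithinAt)
      (by simpa [interior_Icc] using hderiv_nonpos)
  have hle := hanti ⟨le_refl s₁, hs1.le⟩ ⟨hs1.le, le_refl s⟩ hs1.le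
  have hf0 : f s₁ = 0 := by simp [hfdef]; ring
  rw [hf0] at hle
  exact hle
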